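/- Generalized conditional mutual information characterizes conditional independence: Let S be a strictly proper scoring rule with induced generalized entropy H, and let ξ, η, ζ be jointly distributed random variables with ξ taking values in the measurable space Y. Define the generalized conditional mutual information I(ξ; η | ζ) = E_ζ[H(P_{ξ|ζ}) − E_{η|ζ}[H(P_{ξ|(η,ζ)})]]. Then I(ξ; η | ζ) ≥ 0, and I(ξ; η | ζ) = 0 if and only if ξ and η are conditionally independent given ζ, with P_ζ probability 1. -/

import Mathlib

open MeasureTheory ProbabilityTheory

noncomputable section

/-- Generalized entropy induced by a scoring rule `S`: `H(q) = ∫ S(q,y) dq(y)`. -/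
def gEntropy {𝒴 : Type*} [MeasurableSpace 𝒴] (S : Measure 𝒴 → 𝒴 → ℝ) (q : Measure 𝒴) : ℝ :=
  ∫ y, S q y ∂q

/-- A (negatively oriented) scoring rule is proper if the expected score is minimized by the
true distribution. -/
def IsProper {𝒴 : Type*} [MeasurableSpace 𝒴] (S : Measure 𝒴 → 𝒴 → ℝ) : Prop :=
  ∀ p q : Measure 𝒴, IsProbabilityMeasure p → IsProbabilityMeasure q →
    ∫ y, S p y ∂p ≤ ∫ y, S q y ∂p

/-- A scoring rule is strictly proper if it is proper and the minimum is uniquely attained at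
the true distribution. -/
def IsStrictlyProper {𝒴 : Type*} [MeasurableSpace 𝒴] (S : Measure 𝒴 → 𝒴 → ℝ) : Prop :=
  IsProper S ∧ ∀ p q : Measure 𝒴, IsProbabilityMeasure p → IsProbabilityMeasure q →
    q ≠ p → ∫ y, S p y ∂p < ∫ y, S q y ∂p

/-- Generalized conditional mutual information
`I(ξ; η | ζ) = E[H(P_{ξ|ζ}) − H(P_{ξ|(η,ζ)})]` induced by the generalized entropy of `S`. -/
def gCondMutualInfo {Ω 𝒴 𝒲 𝒵 : Type*} [MeasurableSpace Ω] [MeasurableSpace 𝒴]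
    [StandardBorelSpace 𝒴] [Nonempty 𝒴] [MeasurableSpace 𝒲] [MeasurableSpace 𝒵]
    (S : Measure 𝒴 → 𝒴 → ℝ) (μ : Measure Ω) [IsFiniteMeasure μ]
    (ξ : Ω → 𝒴) (η : Ω → 𝒲) (ζ : Ω → 𝒵) : ℝ :=
  ∫ ω, (gEntropy S (condDistrib ξ ζ μ (ζ ω))
      - gEntropy S (condDistrib ξ (fun ω' => (η ω', ζ ω')) μ (η ω, ζ ω))) ∂μ

open scoped ENNReal

set_option linter.unusedVariables false

/-- bounded measurable functions are integrable on finite measures -/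
lemma integrable_of_bounded_measurable {α : Type*} [MeasurableSpace α] (μ : Measure α)
    [IsFiniteMeasure μ] {f : α → ℝ} (hf : Measurable f) {C : ℝ} (h : ∀ x, |f x| ≤ C) :
    Integrable f μ :=
  (integrable_const C).mono' hf.aestronglyMeasurable
    (Filter.Eventually.of_forall (by simpa [Real.norm_eq_abs] using h))

lemma condDistrib_ae_eq_condExp_toReal {α β Ω : Type*} [MeasurableSpace Ω] [StandardBorelSpace Ω]
    [Nonempty Ω] {mα : MeasurableSpace α} {mβ : MeasurableSpace β} {μ : Measure α}
    [IsFiniteMeasure μ] {X : α → β} {Y : α → Ω} {s : Set Ω}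
    (hX : Measurable X) (hY : Measurable Y) (hs : MeasurableSet s) :
    (fun a => (condDistrib Y X μ (X a) s).toReal)
      =ᵐ[μ] μ[(Y ⁻¹' s).indicator fun _ => (1:ℝ)|mβ.comap X] :=
  condDistrib_ae_eq_condExp hX hY hs

/-- A countable π-system that determines probability measures. -/
lemma exists_countable_piSystem (𝒴 : Type*) [m𝒴 : MeasurableSpace 𝒴]
    [MeasurableSpace.CountablyGenerated 𝒴] :
    ∃ T : Set (Set 𝒴), T.Countable ∧ IsPiSystem T ∧ (∀ s ∈ T, MeasurableSet s) ∧
      ∀ (ρ₁ ρ₂ : Measure 𝒴), IsProbabilityMeasure ρ₁ → IsProbabilityMeasure ρ₂ →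
        (∀ s ∈ T, ρ₁ s = ρ₂ s) → ρ₁ = ρ₂ := by
  classical
  obtain ⟨e, he⟩ := (MeasurableSpace.countable_countableGeneratingSet (α := 𝒴)).exists_eq_range
    (MeasurableSpace.nonempty_countableGeneratingSet)
  set f : Finset ℕ → Set 𝒴 := fun F => ⋂ i ∈ F, e i with hf
  refine ⟨Set.range f, Set.countable_range f, ?_, ?_, ?_⟩
  · rintro _ ⟨F₁, rfl⟩ _ ⟨F₂, rfl⟩ -
    exact ⟨F₁ ∪ F₂, by simp [hf, Set.iInter_or, Set.iInter_inter_distrib]⟩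
  · rintro _ ⟨F, rfl⟩
    refine MeasurableSet.biInter F.countable_toSet fun i _ => ?_
    exact MeasurableSpace.measurableSet_countableGeneratingSet (by rw [he]; exact ⟨i, rfl⟩)
  · intro ρ₁ ρ₂ h₁ h₂ hagree
    have hgen : m𝒴 = MeasurableSpace.generateFrom (Set.range f) := by
      refine le_antisymm ?_ ?_
      · conv_lhs => rw [← MeasurableSpace.generateFrom_countableGeneratingSet (α := 𝒴)]
        refine MeasurableSpace.generateFrom_le fun s hs => ?_
        rw [he] at hs
        obtain ⟨i, rfl⟩ := hs
        have : e i = f {i} := by simp [hf]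
        rw [this]
        exact MeasurableSpace.measurableSet_generateFrom ⟨{i}, rfl⟩
      · refine MeasurableSpace.generateFrom_le ?_
        rintro _ ⟨F, rfl⟩
        refine MeasurableSet.biInter F.countable_toSet fun i _ => ?_
        exact MeasurableSpace.measurableSet_countableGeneratingSet (by rw [he]; exact ⟨i, rfl⟩)
    refine MeasureTheory.ext_of_generate_finite _ hgen ?_ hagree (by simp [h₁.measure_univ, h₂.measure_univ])
    rintro _ ⟨F₁, rfl⟩ _ ⟨F₂, rfl⟩ -
    exact ⟨F₁ ∪ F₂, by simp [hf, Set.iInter_or, Set.iInter_inter_distrib]⟩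
open scoped ENNReal

/-- Bochner integral against a bind measure. -/
lemma integral_bind_of_integrable {Ω' 𝒴 : Type*} [MeasurableSpace Ω'] [MeasurableSpace 𝒴]
    (m : Measure Ω') [IsFiniteMeasure m] {P : Ω' → Measure 𝒴} (hP : Measurable P)
    {f : 𝒴 → ℝ} (hf : Integrable f (m.bind P)) :
    Integrable (fun ω => ∫ y, f y ∂(P ω)) m ∧
      ∫ ω, (∫ y, f y ∂(P ω)) ∂m = ∫ y, f y ∂(m.bind P) := by
  set q := m.bind P with hq
  -- measurable version of f
  set f₀ : 𝒴 → ℝ := hf.1.mk f with hf₀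
  have hf₀m : StronglyMeasurable f₀ := hf.1.stronglyMeasurable_mk
  have hf₀meas : Measurable f₀ := hf₀m.measurable
  have hae : f =ᵐ[q] f₀ := hf.1.ae_eq_mk
  have h_int0 : Integrable f₀ q := hf.congr hae
  -- null set transfer
  set N : Set 𝒴 := toMeasurable q {y | f y ≠ f₀ y} with hN
  have hNmeas : MeasurableSet N := measurableSet_toMeasurable _ _
  have hNq : q N = 0 := by
    rw [measure_toMeasurable]
    exact hae
  have hPN : ∀ᵐ ω ∂m, P ω N = 0 := by
    have hb : ∫⁻ ω, P ω N ∂m = 0 := by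
      rw [← Measure.bind_apply hNmeas hP.aemeasurable, ← hq, hNq]
    exact (lintegral_eq_zero_iff ((Measure.measurable_coe hNmeas).comp hP)).mp hb
  have hfP : ∀ᵐ ω ∂m, f =ᵐ[P ω] f₀ := by
    filter_upwards [hPN] with ω hω
    refine measure_mono_null ?_ hω
    intro y hy
    exact subset_toMeasurable _ _ hy
  -- lintegral bounds
  have hnormmeas : Measurable fun y => (‖f₀ y‖₊ : ℝ≥0∞) := hf₀meas.nnnorm.coe_nnreal_ennreal
  have hnorm : ∫⁻ y, (‖f₀ y‖₊ : ℝ≥0∞) ∂q < ⊤ := h_int0.2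
  have hswapnorm : ∫⁻ ω, (∫⁻ y, (‖f₀ y‖₊ : ℝ≥0∞) ∂(P ω)) ∂m = ∫⁻ y, (‖f₀ y‖₊ : ℝ≥0∞) ∂q := by
    rw [hq, Measure.lintegral_bind hP.aemeasurable hnormmeas.aemeasurable]
  have hmeasnormint : Measurable fun ω => ∫⁻ y, (‖f₀ y‖₊ : ℝ≥0∞) ∂(P ω) :=
    (Measure.measurable_lintegral hnormmeas).comp hP
  have haefin : ∀ᵐ ω ∂m, ∫⁻ y, (‖f₀ y‖₊ : ℝ≥0∞) ∂(P ω) < ⊤ :=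
    ae_lt_top hmeasnormint (by rw [hswapnorm]; exact hnorm.ne)
  have hint_each : ∀ᵐ ω ∂m, Integrable f₀ (P ω) := by
    filter_upwards [haefin] with ω hω
    exact ⟨hf₀m.aestronglyMeasurable, hω⟩
  -- pos/neg parts
  set A : Ω' → ℝ≥0∞ := fun ω => ∫⁻ y, ENNReal.ofReal (f₀ y) ∂(P ω) with hA
  set B : Ω' → ℝ≥0∞ := fun ω => ∫⁻ y, ENNReal.ofReal (-f₀ y) ∂(P ω) with hB
  have hAmeas : Measurable A :=
    (Measure.measurable_lintegral hf₀meas.ennreal_ofReal).comp hP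
  have hBmeas : Measurable B :=
    (Measure.measurable_lintegral hf₀meas.neg.ennreal_ofReal).comp hP
  have hAle : ∀ ω, A ω ≤ ∫⁻ y, (‖f₀ y‖₊ : ℝ≥0∞) ∂(P ω) := fun ω =>
    lintegral_mono fun y => Real.ofReal_le_enorm _
  have hBle : ∀ ω, B ω ≤ ∫⁻ y, (‖f₀ y‖₊ : ℝ≥0∞) ∂(P ω) := fun ω =>
    lintegral_mono fun y => le_trans (Real.ofReal_le_enorm _) (by rw [enorm_neg]; exact le_rfl)
  have hAswap : ∫⁻ ω, A ω ∂m = ∫⁻ y, ENNReal.ofReal (f₀ y) ∂q := by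
    rw [hq, Measure.lintegral_bind hP.aemeasurable hf₀meas.ennreal_ofReal.aemeasurable]
  have hBswap : ∫⁻ ω, B ω ∂m = ∫⁻ y, ENNReal.ofReal (-f₀ y) ∂q := by
    rw [hq, Measure.lintegral_bind (f := fun y => ENNReal.ofReal (-f₀ y)) hP.aemeasurable hf₀meas.neg.ennreal_ofReal.aemeasurable]
  have hAtop : ∫⁻ ω, A ω ∂m ≠ ⊤ := by
    rw [hAswap]
    exact ((lintegral_mono fun y => Real.ofReal_le_enorm _).trans_lt hnorm).ne
  have hBtop : ∫⁻ ω, B ω ∂m ≠ ⊤ := by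
    rw [hBswap]
    refine ((lintegral_mono fun y => ?_).trans_lt hnorm).ne
    exact le_trans (Real.ofReal_le_enorm _) (by rw [enorm_neg]; exact le_rfl)
  have hAfin : ∀ᵐ ω ∂m, A ω < ⊤ := ae_lt_top hAmeas hAtop
  have hBfin : ∀ᵐ ω ∂m, B ω < ⊤ := ae_lt_top hBmeas hBtop
  have hABi : ∀ᵐ ω ∂m, ∫ y, f₀ y ∂(P ω) = (A ω).toReal - (B ω).toReal := by
    filter_upwards [hint_each] with ω hω
    exact integral_eq_lintegral_pos_part_sub_lintegral_neg_part hω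
  have hIA : Integrable (fun ω => (A ω).toReal) m :=
    integrable_toReal_of_lintegral_ne_top hAmeas.aemeasurable hAtop
  have hIB : Integrable (fun ω => (B ω).toReal) m :=
    integrable_toReal_of_lintegral_ne_top hBmeas.aemeasurable hBtop
  have hIf₀ : Integrable (fun ω => ∫ y, f₀ y ∂(P ω)) m :=
    (hIA.sub hIB).congr (hABi.mono fun ω h => h.symm)
  have hcong : (fun ω => ∫ y, f y ∂(P ω)) =ᵐ[m] fun ω => ∫ y, f₀ y ∂(P ω) := by
    filter_upwards [hfP] with ω hω
    exact integral_congr_ae hω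
  constructor
  · exact hIf₀.congr hcong.symm
  · calc ∫ ω, (∫ y, f y ∂(P ω)) ∂m = ∫ ω, (∫ y, f₀ y ∂(P ω)) ∂m := integral_congr_ae hcong
    _ = ∫ ω, ((A ω).toReal - (B ω).toReal) ∂m := integral_congr_ae hABi
    _ = ∫ ω, (A ω).toReal ∂m - ∫ ω, (B ω).toReal ∂m := integral_sub hIA hIB
    _ = (∫⁻ ω, A ω ∂m).toReal - (∫⁻ ω, B ω ∂m).toReal := by
        rw [integral_toReal hAmeas.aemeasurable hAfin, integral_toReal hBmeas.aemeasurable hBfin]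
    _ = (∫⁻ y, ENNReal.ofReal (f₀ y) ∂q).toReal - (∫⁻ y, ENNReal.ofReal (-f₀ y) ∂q).toReal := by
        rw [hAswap, hBswap]
    _ = ∫ y, f₀ y ∂q := (integral_eq_lintegral_pos_part_sub_lintegral_neg_part h_int0).symm
    _ = ∫ y, f y ∂q := (integral_congr_ae hae).symm

/-- A `comap ζ`-measurable bounded function is a.e. constant under `condDistrib id ζ μ`. -/
lemma ae_ae_eq_of_comap_measurable {Ω 𝒵 : Type*} [MeasurableSpace Ω] [StandardBorelSpace Ω]
    [Nonempty Ω] [MeasurableSpace 𝒵] {μ : Measure Ω} [IsProbabilityMeasure μ]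
    {ζ : Ω → 𝒵} (hζ : Measurable ζ) {g : Ω → ℝ}
    (hg : Measurable[MeasurableSpace.comap ζ inferInstance] g) (hb : ∀ ω, |g ω| ≤ 1) :
    ∀ᵐ ω ∂μ, ∀ᵐ ω' ∂(condDistrib id ζ μ (ζ ω)), g ω' = g ω := by
  have hgm : Measurable g := hg.mono hζ.comap_le le_rfl
  have hgi : Integrable g μ := integrable_of_bounded_measurable μ hgm hb
  have hb2 : ∀ ω, |g ω * g ω| ≤ 1 := fun ω => by
    rw [abs_mul]
    nlinarith [abs_nonneg (g ω), hb ω]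
  have hgi2 : Integrable (fun ω => g ω * g ω) μ :=
    integrable_of_bounded_measurable μ (hgm.mul hgm) hb2
  have hgSM : StronglyMeasurable[MeasurableSpace.comap ζ inferInstance] g :=
    Measurable.stronglyMeasurable (mα := MeasurableSpace.comap ζ inferInstance) hg
  have hgSM2 : StronglyMeasurable[MeasurableSpace.comap ζ inferInstance] (fun ω => g ω * g ω) :=
    Measurable.stronglyMeasurable (mα := MeasurableSpace.comap ζ inferInstance) (hg.mul hg)
  have e1 : μ[g|MeasurableSpace.comap ζ inferInstance] = g :=
    condExp_of_stronglyMeasurable hζ.comap_le hgSM hgi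
  have e2 : μ[g|MeasurableSpace.comap ζ inferInstance]
      =ᵐ[μ] fun ω => ∫ ω', g ω' ∂(condDistrib id ζ μ (ζ ω)) :=
    condExp_ae_eq_integral_condDistrib_id hζ hgi
  have e1' : μ[fun ω => g ω * g ω|MeasurableSpace.comap ζ inferInstance] = fun ω => g ω * g ω :=
    condExp_of_stronglyMeasurable hζ.comap_le hgSM2 hgi2
  have e2' : μ[fun ω => g ω * g ω|MeasurableSpace.comap ζ inferInstance]
      =ᵐ[μ] fun ω => ∫ ω', g ω' * g ω' ∂(condDistrib id ζ μ (ζ ω)) :=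
    condExp_ae_eq_integral_condDistrib_id hζ hgi2
  have a1 : ∀ᵐ ω ∂μ, ∫ ω', g ω' ∂(condDistrib id ζ μ (ζ ω)) = g ω := by
    filter_upwards [e2] with ω hω
    rw [← hω, e1]
  have a2 : ∀ᵐ ω ∂μ, ∫ ω', g ω' * g ω' ∂(condDistrib id ζ μ (ζ ω)) = g ω * g ω := by
    filter_upwards [e2'] with ω hω
    rw [← hω, e1']
  filter_upwards [a1, a2] with ω h1 h2
  set mω := condDistrib id ζ μ (ζ ω) with hmω
  have : IsProbabilityMeasure mω := inferInstance
  have hig : Integrable g mω := integrable_of_bounded_measurable mω hgm hb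
  have hig2 : Integrable (fun ω' => g ω' * g ω') mω :=
    integrable_of_bounded_measurable mω (hgm.mul hgm) hb2
  have hzero : ∫ ω', (g ω' - g ω) ^ 2 ∂mω = 0 := by
    have hexp : ∀ ω', (g ω' - g ω) ^ 2 = g ω' * g ω' - (2 * g ω) * g ω' + g ω * g ω := by
      intro ω'; ring
    have i2 : Integrable (fun ω' => (2 * g ω) * g ω') mω := hig.const_mul _
    have i1 : Integrable (fun ω' => g ω' * g ω' - (2 * g ω) * g ω') mω := hig2.sub i2
    rw [integral_congr_ae (Filter.Eventually.of_forall hexp),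
      integral_add i1 (integrable_const _), integral_sub hig2 i2,
      integral_const_mul, h1, h2, integral_const]
    simp [measure_univ]
    ring
  have hnn : 0 ≤ᵐ[mω] fun ω' => (g ω' - g ω) ^ 2 :=
    Filter.Eventually.of_forall fun ω' => sq_nonneg _
  have hint : Integrable (fun ω' => (g ω' - g ω) ^ 2) mω := by
    have : (fun ω' => (g ω' - g ω) ^ 2)
        = fun ω' => g ω' * g ω' - (2 * g ω) * g ω' + g ω * g ω := by
      funext ω'; ring
    rw [this]
    exact (hig2.sub (hig.const_mul _)).add (integrable_const _)
  have := (integral_eq_zero_iff_of_nonneg_ae hnn hint).mp hzero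
  filter_upwards [this] with ω' hω'
  have : (g ω' - g ω) ^ 2 = 0 := hω'
  have := pow_eq_zero_iff (n := 2) (by norm_num) |>.mp this
  linarith [this]

/-- Core lemma: the average entropy of the components of a mixture is at most the entropy of
the mixture, with equality iff the components are a.e. equal to the mixture. -/
lemma core_entropy_bind {Ω' 𝒴 : Type*} [MeasurableSpace Ω'] [MeasurableSpace 𝒴]
    {S : Measure 𝒴 → 𝒴 → ℝ} (hS : IsStrictlyProper S)
    (m : Measure Ω') [IsProbabilityMeasure m] {P : Ω' → Measure 𝒴} (hP : Measurable P)
    (hPP : ∀ ω, IsProbabilityMeasure (P ω))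
    {q : Measure 𝒴} (hqP : IsProbabilityMeasure q) (hq : q = m.bind P)
    (hv : Integrable (fun ω => gEntropy S (P ω)) m) :
    ∫ ω, gEntropy S (P ω) ∂m ≤ gEntropy S q ∧
      (∫ ω, gEntropy S (P ω) ∂m = gEntropy S q ↔ ∀ᵐ ω ∂m, P ω = q) := by
  -- the common "easy direction": if a.e. P ω = q then the average entropy equals H(q)
  have heasy : (∀ᵐ ω ∂m, P ω = q) → ∫ ω, gEntropy S (P ω) ∂m = gEntropy S q := by
    intro h
    have : (fun ω => gEntropy S (P ω)) =ᵐ[m] fun _ => gEntropy S q := by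
      filter_upwards [h] with ω hω
      rw [hω]
    rw [integral_congr_ae this, integral_const, probReal_univ]
    simp
  by_cases hfi : Integrable (fun y => S q y) q
  · -- Case I : the score of the mixture is genuinely integrable against the mixture
    have hfi' : Integrable (fun y => S q y) (m.bind P) := hq ▸ hfi
    obtain ⟨hgi, hgeq⟩ := integral_bind_of_integrable m hP hfi'
    have hgeq' : ∫ ω, (∫ y, S q y ∂(P ω)) ∂m = gEntropy S q := by
      rw [hgeq, gEntropy, ← hq]
    have hpoint : ∀ ω, gEntropy S (P ω) ≤ ∫ y, S q y ∂(P ω) := fun ω =>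
      hS.1 (P ω) q (hPP ω) hqP
    constructor
    · calc ∫ ω, gEntropy S (P ω) ∂m ≤ ∫ ω, (∫ y, S q y ∂(P ω)) ∂m :=
            integral_mono_ae hv hgi (Filter.Eventually.of_forall hpoint)
        _ = gEntropy S q := hgeq'
    constructor
    · intro heq
      have hzero : ∫ ω, ((∫ y, S q y ∂(P ω)) - gEntropy S (P ω)) ∂m = 0 := by
        rw [integral_sub hgi hv, hgeq', heq, sub_self]
      have hnn : 0 ≤ᵐ[m] fun ω => (∫ y, S q y ∂(P ω)) - gEntropy S (P ω) :=
        Filter.Eventually.of_forall fun ω => sub_nonneg.mpr (hpoint ω)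
      have := (integral_eq_zero_iff_of_nonneg_ae hnn (hgi.sub hv)).mp hzero
      filter_upwards [this] with ω hω
      by_contra hne
      have hlt : gEntropy S (P ω) < ∫ y, S q y ∂(P ω) :=
        hS.2 (P ω) q (hPP ω) hqP (fun h => hne h.symm)
      have : (∫ y, S q y ∂(P ω)) - gEntropy S (P ω) = 0 := hω
      linarith
    · exact heasy
  · -- Case II : junk case, H(q) = 0
    have hq0 : gEntropy S q = 0 := integral_undef hfi
    have hpt : ∀ ω, gEntropy S (P ω) ≤ 0 ∧ (P ω ≠ q → gEntropy S (P ω) < 0) := by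
      intro ω
      by_cases hPω : P ω = q
      · rw [hPω, hq0]
        exact ⟨le_refl _, fun h => absurd rfl (hPω ▸ h)⟩
      · -- the mixture r := ½ P ω + ½ q
        set r : Measure 𝒴 := (2⁻¹ : ℝ≥0∞) • P ω + (2⁻¹ : ℝ≥0∞) • q with hr
        have hPωuniv : P ω Set.univ = 1 := (hPP ω).measure_univ
        have hquniv : q Set.univ = 1 := hqP.measure_univ
        have hrprob : IsProbabilityMeasure r := by
          constructor
          rw [hr]
          simp [hPωuniv, hquniv, Measure.add_apply, ENNReal.inv_two_add_inv_two]
        have hrq : r ≠ q := by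
          intro h
          apply hPω
          ext s hs
          have := congrArg (fun ρ => ρ s) h
          simp only [hr, Measure.add_apply, Measure.smul_apply, smul_eq_mul] at this
          have hfin1 : P ω s ≤ 1 := le_trans (measure_mono (Set.subset_univ _)) hPωuniv.le
          have hfin2 : q s ≤ 1 := le_trans (measure_mono (Set.subset_univ _)) hquniv.le
          have h1 : (2⁻¹ : ℝ≥0∞) ≠ ⊤ := by simp
          have hne1 : P ω s ≠ ⊤ := (lt_of_le_of_lt hfin1 (by norm_num)).ne
          have hne2 : q s ≠ ⊤ := (lt_of_le_of_lt hfin2 (by norm_num)).ne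
          have htr := congrArg ENNReal.toReal this
          rw [ENNReal.toReal_add (by finiteness) (by finiteness), ENNReal.toReal_mul,
            ENNReal.toReal_mul] at htr
          simp only [ENNReal.toReal_inv, ENNReal.toReal_ofNat] at htr
          rw [← ENNReal.toReal_eq_toReal_iff' hne1 hne2]
          linarith
        -- q ≤ 2 • r
        have hq_le : q ≤ (2 : ℝ≥0∞) • r := by
          intro s
          rw [hr]
          simp only [Measure.smul_apply, Measure.add_apply, smul_eq_mul, mul_add,
            ← mul_assoc]
          rw [ENNReal.mul_inv_cancel (by norm_num) (by norm_num)]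
          simp only [one_mul]
          exact le_add_self
        have hPω_le : P ω ≤ (2 : ℝ≥0∞) • r := by
          intro s
          rw [hr]
          simp only [Measure.smul_apply, Measure.add_apply, smul_eq_mul, mul_add,
            ← mul_assoc]
          rw [ENNReal.mul_inv_cancel (by norm_num) (by norm_num)]
          simp only [one_mul]
          exact le_self_add
        -- S q is not integrable w.r.t. r
        have hnir : ¬ Integrable (fun y => S q y) r := by
          intro h
          have h2 : Integrable (fun y => S q y) ((2 : ℝ≥0∞) • r) :=
            (integrable_smul_measure (by norm_num) (by norm_num)).mpr h
          exact hfi (h2.mono_measure hq_le)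
        have hIr : ∫ y, S q y ∂r = 0 := integral_undef hnir
        have hHr_lt : ∫ y, S r y ∂r < 0 := by
          have := hS.2 r q hrprob hqP (fun h => hrq h.symm)
          rw [hIr] at this
          exact this
        have hSr_int : Integrable (fun y => S r y) r := by
          by_contra h
          rw [integral_undef h] at hHr_lt
          exact lt_irrefl _ hHr_lt
        -- split the integral over r
        have hSr_int1 : Integrable (fun y => S r y) ((2⁻¹ : ℝ≥0∞) • P ω) :=
          hSr_int.mono_measure (Measure.le_add_right (le_refl _))
        have hSr_int2 : Integrable (fun y => S r y) ((2⁻¹ : ℝ≥0∞) • q) :=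
          hSr_int.mono_measure (Measure.le_add_left (le_refl _))
        have hSr_intP : Integrable (fun y => S r y) (P ω) :=
          (integrable_smul_measure (by norm_num) (by norm_num)).mp hSr_int1
        have hSr_intq : Integrable (fun y => S r y) q :=
          (integrable_smul_measure (by norm_num) (by norm_num)).mp hSr_int2
        have hsplit : ∫ y, S r y ∂r
            = (2⁻¹ : ℝ≥0∞).toReal * (∫ y, S r y ∂(P ω)) + (2⁻¹ : ℝ≥0∞).toReal * (∫ y, S r y ∂q) := by
          rw [hr, integral_add_measure hSr_int1 hSr_int2, integral_smul_measure,
            integral_smul_measure]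
          simp [smul_eq_mul]
          rfl
        have htoReal : (2⁻¹ : ℝ≥0∞).toReal = 2⁻¹ := by simp
        have hp1 : gEntropy S (P ω) ≤ ∫ y, S r y ∂(P ω) := hS.1 (P ω) r (hPP ω) hrprob
        have hp2 : (0 : ℝ) ≤ ∫ y, S r y ∂q := by
          have := hS.1 q r hqP hrprob
          rw [show ∫ y, S q y ∂q = gEntropy S q from rfl, hq0] at this
          exact this
        have : gEntropy S (P ω) < 0 := by
          rw [hsplit, htoReal] at hHr_lt
          nlinarith
        exact ⟨this.le, fun _ => this⟩
    constructor
    · rw [hq0]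
      exact integral_nonpos fun ω => (hpt ω).1
    constructor
    · intro heq
      rw [hq0] at heq
      have hnn : 0 ≤ᵐ[m] fun ω => -gEntropy S (P ω) :=
        Filter.Eventually.of_forall fun ω => neg_nonneg.mpr (hpt ω).1
      have hzero : ∫ ω, -gEntropy S (P ω) ∂m = 0 := by
        rw [integral_neg, heq, neg_zero]
      have := (integral_eq_zero_iff_of_nonneg_ae hnn hv.neg).mp hzero
      filter_upwards [this] with ω hω
      by_contra hne
      have := (hpt ω).2 hne
      have h0 : -gEntropy S (P ω) = 0 := hω
      linarith
    · exact heasy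

lemma indicator_one_SM {α : Type*} (m : MeasurableSpace α) {A : Set α}
    (hA : MeasurableSet[m] A) :
    StronglyMeasurable[m] (A.indicator fun _ => (1:ℝ)) :=
  (@stronglyMeasurable_const α ℝ m _ 1).indicator hA

lemma toReal_SM {α : Type*} (m : MeasurableSpace α) {f : α → ENNReal}
    (hf : Measurable[m] f) : StronglyMeasurable[m] fun x => (f x).toReal :=
  (@Measurable.ennreal_toReal α m f hf).stronglyMeasurable

/-- **Generalized conditional mutual information characterizes conditional independence.**
For a strictly proper scoring rule `S` and jointly distributed random variables `ξ` (with
values in a standard Borel space), `η`, `ζ`, one has `I(ξ; η | ζ) ≥ 0`, and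
`I(ξ; η | ζ) = 0` if and only if `ξ` and `η` are conditionally independent given `ζ`
(with probability 1). -/
theorem gCondMutualInfo_nonneg_and_eq_zero_iff_condIndepFun
    {Ω 𝒴 𝒲 𝒵 : Type*} [MeasurableSpace Ω] [StandardBorelSpace Ω] [Nonempty Ω]
    [MeasurableSpace 𝒲] [MeasurableSpace 𝒵]
    [MeasurableSpace 𝒴] [StandardBorelSpace 𝒴] [Nonempty 𝒴]
    (μ : Measure Ω) [IsProbabilityMeasure μ]
    (S : Measure 𝒴 → 𝒴 → ℝ) (hS : IsStrictlyProper S)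
    (ξ : Ω → 𝒴) (η : Ω → 𝒲) (ζ : Ω → 𝒵)
    (hξ : Measurable ξ) (hη : Measurable η) (hζ : Measurable ζ)
    -- all integrals appearing are assumed to be well defined and finite
    (hint_cond : Integrable (fun ω => gEntropy S (condDistrib ξ ζ μ (ζ ω))) μ)
    (hint_cond2 : Integrable
      (fun ω => gEntropy S (condDistrib ξ (fun ω' => (η ω', ζ ω')) μ (η ω, ζ ω))) μ)
    (hint_cross : Integrable
      (fun ω => ∫ y, S (condDistrib ξ ζ μ (ζ ω)) y
        ∂(condDistrib ξ (fun ω' => (η ω', ζ ω')) μ (η ω, ζ ω))) μ) :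
    0 ≤ gCondMutualInfo S μ ξ η ζ
    ∧ (gCondMutualInfo S μ ξ η ζ = 0
        ↔ CondIndepFun (MeasurableSpace.comap ζ inferInstance) hζ.comap_le ξ η μ) := by
  classical
  obtain ⟨T, hTc, hTpi, hTmeas, hText⟩ := exists_countable_piSystem 𝒴
  have hpair : Measurable (fun ω' => (η ω', ζ ω')) := hη.prodMk hζ
  have hmζ : MeasurableSpace.comap ζ inferInstance ≤ (inferInstance : MeasurableSpace Ω) :=
    hζ.comap_le
  have hmp : MeasurableSpace.comap (fun ω' => (η ω', ζ ω')) inferInstance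
      ≤ (inferInstance : MeasurableSpace Ω) := hpair.comap_le
  have hζp : MeasurableSpace.comap ζ inferInstance
      ≤ MeasurableSpace.comap (fun ω' => (η ω', ζ ω')) inferInstance := by
    have h1 : MeasurableSpace.comap ζ (inferInstance : MeasurableSpace 𝒵)
        = MeasurableSpace.comap (fun ω' => (η ω', ζ ω'))
          (MeasurableSpace.comap Prod.snd inferInstance) := by
      rw [MeasurableSpace.comap_comp]; rfl
    rw [h1]
    exact MeasurableSpace.comap_mono measurable_snd.comap_le
  set P : Ω → Measure 𝒴 :=
    fun ω => condDistrib ξ (fun ω' => (η ω', ζ ω')) μ (η ω, ζ ω) with hPdef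
  set Q : Ω → Measure 𝒴 := fun ω => condDistrib ξ ζ μ (ζ ω) with hQdef
  set M : Ω → Measure Ω := fun ω => condDistrib id ζ μ (ζ ω) with hMdef
  have hPprob : ∀ ω, IsProbabilityMeasure (P ω) := fun ω => by
    rw [hPdef]; infer_instance
  have hQprob : ∀ ω, IsProbabilityMeasure (Q ω) := fun ω => by
    rw [hQdef]; infer_instance
  have hMprob : ∀ ω, IsProbabilityMeasure (M ω) := fun ω => by
    rw [hMdef]; infer_instance
  have hPmeas : Measurable P := (Kernel.measurable _).comp hpair
  have hQmeas : Measurable Q := (Kernel.measurable _).comp hζ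
  set u : Ω → ℝ := fun ω => gEntropy S (Q ω) with hudef
  set v : Ω → ℝ := fun ω => gEntropy S (P ω) with hvdef
  have hu_int : Integrable u μ := hint_cond
  have hv_int : Integrable v μ := hint_cond2
  -- ST1 : tower property of conditional distributions
  have hbind : ∀ᵐ ω ∂μ, Q ω = (M ω).bind P := by
    have hstep : ∀ s ∈ T, ∀ᵐ ω ∂μ, Q ω s = ((M ω).bind P) s := by
      intro s hsT
      have hs := hTmeas s hsT
      have hPs_meas : Measurable fun ω => (P ω s).toReal :=
        ((Measure.measurable_coe hs).comp hPmeas).ennreal_toReal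
      have hPs_bd : ∀ (ρ : Measure 𝒴), IsProbabilityMeasure ρ → |(ρ s).toReal| ≤ 1 := by
        intro ρ hρ
        rw [abs_of_nonneg ENNReal.toReal_nonneg]
        calc (ρ s).toReal ≤ (ρ Set.univ).toReal :=
              ENNReal.toReal_mono (measure_ne_top _ _) (measure_mono (Set.subset_univ _))
          _ = 1 := by rw [hρ.measure_univ]; simp
      have hPs_int : Integrable (fun ω => (P ω s).toReal) μ :=
        integrable_of_bounded_measurable μ hPs_meas (fun ω => hPs_bd _ (hPprob ω))
      have c₁ := condDistrib_ae_eq_condExp_toReal (μ := μ) hζ hξ hs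
      have c₂ := condDistrib_ae_eq_condExp_toReal (μ := μ) hpair hξ hs
      have c₃ := (condExp_condExp_of_le (μ := μ) (f := (ξ ⁻¹' s).indicator fun _ => (1:ℝ)) hζp hmp).symm
      have c₄ : μ[μ[(ξ ⁻¹' s).indicator fun _ => (1:ℝ)|MeasurableSpace.comap (fun ω' => (η ω', ζ ω')) inferInstance]|MeasurableSpace.comap ζ inferInstance]
          =ᵐ[μ] μ[fun ω => (P ω s).toReal|MeasurableSpace.comap ζ inferInstance] := condExp_congr_ae c₂.symm
      have c₅ := condExp_ae_eq_integral_condDistrib_id hζ hPs_int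
      have hchain : (fun ω => (Q ω s).toReal)
          =ᵐ[μ] fun ω => ∫ ω', (P ω' s).toReal ∂(M ω) :=
        c₁.trans (c₃.trans (c₄.trans c₅))
      filter_upwards [hchain] with ω hω
      have hbap : ((M ω).bind P) s = ∫⁻ ω', P ω' s ∂(M ω) := Measure.bind_apply hs hPmeas.aemeasurable
      have hlift : ∫ ω', (P ω' s).toReal ∂(M ω) = (∫⁻ ω', P ω' s ∂(M ω)).toReal := by
        refine integral_toReal ((Measure.measurable_coe hs).comp hPmeas).aemeasurable ?_
        exact Filter.Eventually.of_forall fun ω' => measure_lt_top _ _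
      have hQfin : Q ω s ≠ ⊤ := measure_ne_top _ _
      have hbfin : ((M ω).bind P) s ≠ ⊤ := by
        rw [hbap]
        have : ∫⁻ ω', P ω' s ∂(M ω) ≤ ∫⁻ _, 1 ∂(M ω) := by
          refine lintegral_mono fun ω' => ?_
          calc P ω' s ≤ P ω' Set.univ := measure_mono (Set.subset_univ _)
            _ = 1 := (hPprob ω').measure_univ
        refine this.trans_lt ?_ |>.ne
        simp [(hMprob ω).measure_univ]
      rw [← ENNReal.toReal_eq_toReal_iff' hQfin hbfin]
      rw [hω, hlift, hbap]
    have hall : ∀ᵐ ω ∂μ, ∀ s (_ : s ∈ T), Q ω s = ((M ω).bind P) s :=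
      (ae_ball_iff hTc).mpr hstep
    filter_upwards [hall] with ω hω
    have hbp : IsProbabilityMeasure ((M ω).bind P) := by
      constructor
      rw [Measure.bind_apply MeasurableSet.univ hPmeas.aemeasurable]
      have : ∀ ω', P ω' Set.univ = 1 := fun ω' => (hPprob ω').measure_univ
      simp only [this, lintegral_one, (hMprob ω).measure_univ]
    exact hText _ _ (hQprob ω) hbp hω
  -- ST2 : a.e. constancy of ω ↦ Q ω under M ω
  have hconst : ∀ᵐ ω ∂μ, ∀ᵐ ω' ∂(M ω), Q ω' = Q ω := by
    have hstep : ∀ s ∈ T, ∀ᵐ ω ∂μ, ∀ᵐ ω' ∂(M ω), (Q ω' s).toReal = (Q ω s).toReal := by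
      intro s hsT
      have hs := hTmeas s hsT
      have hgmζ : Measurable[MeasurableSpace.comap ζ inferInstance] fun ω => (Q ω s).toReal :=
        @Measurable.ennreal_toReal Ω (MeasurableSpace.comap ζ inferInstance) _ (measurable_condDistrib hs)
      have hbd : ∀ ω, |(Q ω s).toReal| ≤ 1 := by
        intro ω
        rw [abs_of_nonneg ENNReal.toReal_nonneg]
        calc (Q ω s).toReal ≤ (Q ω Set.univ).toReal :=
              ENNReal.toReal_mono (measure_ne_top _ _) (measure_mono (Set.subset_univ _))
          _ = 1 := by rw [(hQprob ω).measure_univ]; simp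
      exact ae_ae_eq_of_comap_measurable hζ hgmζ hbd
    have h1 : ∀ᵐ ω ∂μ, ∀ s (_ : s ∈ T), ∀ᵐ ω' ∂(M ω), (Q ω' s).toReal = (Q ω s).toReal :=
      (ae_ball_iff hTc).mpr hstep
    filter_upwards [h1] with ω hω
    have h2 : ∀ᵐ ω' ∂(M ω), ∀ s (_ : s ∈ T), (Q ω' s).toReal = (Q ω s).toReal :=
      (ae_ball_iff hTc).mpr hω
    filter_upwards [h2] with ω' hω'
    refine hText _ _ (hQprob ω') (hQprob ω) fun s hsT => ?_
    have := hω' s hsT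
    rwa [ENNReal.toReal_eq_toReal_iff' (measure_ne_top _ _) (measure_ne_top _ _)] at this
  -- ST3 : a.e. integrability of v w.r.t. M ω
  have hvint_ae : ∀ᵐ ω ∂μ, Integrable v (M ω) := by
    have h0 : Integrable (fun x : 𝒵 × Ω => v x.2) (Measure.map (fun ω => (ζ ω, ω)) μ) :=
      hv_int.comp_snd_map_prodMk ζ
    exact Integrable.condDistrib_ae (Y := (id : Ω → Ω)) hζ.aemeasurable aemeasurable_id h0
  -- ST4 : key per-ω inequality and equality characterization
  have hkey : ∀ᵐ ω ∂μ, (∫ ω', v ω' ∂(M ω)) ≤ u ω ∧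
      ((∫ ω', v ω' ∂(M ω)) = u ω ↔ ∀ᵐ ω' ∂(M ω), P ω' = Q ω) := by
    filter_upwards [hbind, hvint_ae] with ω h1 h2
    haveI := hMprob ω
    exact core_entropy_bind hS (M ω) hPmeas hPprob (hQprob ω) h1 h2
  -- ST5 : express the mutual information
  set W : Ω → ℝ := fun ω => ∫ ω', v ω' ∂(M ω) with hWdef
  have hWcond : μ[v|MeasurableSpace.comap ζ inferInstance] =ᵐ[μ] W := condExp_ae_eq_integral_condDistrib_id hζ hv_int
  have hW_int : Integrable W μ := integrable_condExp.congr hWcond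
  have hIeq : gCondMutualInfo S μ ξ η ζ = ∫ ω, (u ω - W ω) ∂μ := by
    have h1 : gCondMutualInfo S μ ξ η ζ = ∫ ω, (u ω - v ω) ∂μ := rfl
    rw [h1, integral_sub hu_int hv_int, integral_sub hu_int hW_int]
    congr 1
    rw [← integral_condExp (m := MeasurableSpace.comap ζ inferInstance) hmζ (f := v)]
    exact integral_congr_ae hWcond
  have hae_le : ∀ᵐ ω ∂μ, 0 ≤ u ω - W ω := by
    filter_upwards [hkey] with ω h
    linarith [h.1]
  have hnonneg : 0 ≤ gCondMutualInfo S μ ξ η ζ := by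
    rw [hIeq]
    exact integral_nonneg_of_ae hae_le
  have hiff0 : gCondMutualInfo S μ ξ η ζ = 0 ↔ ∀ᵐ ω ∂μ, W ω = u ω := by
    rw [hIeq, integral_eq_zero_iff_of_nonneg_ae hae_le (hu_int.sub hW_int)]
    constructor
    · intro h
      filter_upwards [h] with ω hω
      have : u ω - W ω = 0 := hω
      linarith
    · intro h
      filter_upwards [h] with ω hω
      show u ω - W ω = 0
      linarith
  have hmid : (∀ᵐ ω ∂μ, W ω = u ω) ↔ (∀ᵐ ω ∂μ, ∀ᵐ ω' ∂(M ω), P ω' = Q ω) := by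
    constructor
    · intro h
      filter_upwards [h, hkey] with ω h1 h2
      exact h2.2.mp h1
    · intro h
      filter_upwards [h, hkey] with ω h1 h2
      exact h2.2.mpr h1
  have hbridge : (∀ᵐ ω ∂μ, ∀ᵐ ω' ∂(M ω), P ω' = Q ω) ↔ (∀ᵐ ω ∂μ, P ω = Q ω) := by
    have hEsetmeas : ∀ s, MeasurableSet s →
        MeasurableSet {ω' | (P ω' s).toReal = (Q ω' s).toReal} := fun s hs =>
      measurableSet_eq_fun (((Measure.measurable_coe hs).comp hPmeas).ennreal_toReal)
        (((Measure.measurable_coe hs).comp hQmeas).ennreal_toReal)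
    set E : Set Ω := ⋂ s ∈ T, {ω' | (P ω' s).toReal = (Q ω' s).toReal} with hEdef
    have hEmeas : MeasurableSet E :=
      MeasurableSet.biInter hTc fun s hsT => hEsetmeas s (hTmeas s hsT)
    have hEmem : ∀ ω', ω' ∈ E ↔ P ω' = Q ω' := by
      intro ω'
      simp only [hEdef, Set.mem_iInter, Set.mem_setOf_eq]
      constructor
      · intro h
        refine hText _ _ (hPprob ω') (hQprob ω') fun s hsT => ?_
        have := h s hsT
        rwa [ENNReal.toReal_eq_toReal_iff' (measure_ne_top _ _) (measure_ne_top _ _)] at this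
      · intro h s hsT
        rw [h]
    have hMEc_meas : Measurable fun ω => ((M ω) Eᶜ).toReal :=
      ((Measure.measurable_coe hEmeas.compl).comp
        ((Kernel.measurable _).comp hζ)).ennreal_toReal
    have hMEc_bd : ∀ ω, |((M ω) Eᶜ).toReal| ≤ 1 := by
      intro ω
      rw [abs_of_nonneg ENNReal.toReal_nonneg]
      calc ((M ω) Eᶜ).toReal ≤ ((M ω) Set.univ).toReal :=
            ENNReal.toReal_mono (measure_ne_top _ _) (measure_mono (Set.subset_univ _))
        _ = 1 := by rw [(hMprob ω).measure_univ]; simp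
    have hMEc_int : Integrable (fun ω => ((M ω) Eᶜ).toReal) μ :=
      integrable_of_bounded_measurable μ hMEc_meas hMEc_bd
    have hMEc : (fun ω => ((M ω) Eᶜ).toReal)
        =ᵐ[μ] μ[(Eᶜ).indicator fun _ => (1:ℝ)|MeasurableSpace.comap ζ inferInstance] := by
      have h := condDistrib_ae_eq_condExp_toReal (μ := μ) (X := ζ) (Y := (id : Ω → Ω)) hζ
        measurable_id hEmeas.compl
      simpa using h
    have hval : ∫ ω, ((M ω) Eᶜ).toReal ∂μ = (μ Eᶜ).toReal := by
      rw [integral_congr_ae hMEc, integral_condExp hmζ, integral_indicator hEmeas.compl]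
      simp
      rfl
    constructor
    · intro h
      have h2 : ∀ᵐ ω ∂μ, (M ω) Eᶜ = 0 := by
        filter_upwards [h, hconst] with ω h1 hc
        have hin : ∀ᵐ ω' ∂(M ω), ω' ∈ E := by
          filter_upwards [h1, hc] with ω' hp hqc
          exact (hEmem ω').mpr (by rw [hp, ← hqc])
        have h0 : (M ω) {ω' | ¬ ω' ∈ E} = 0 := ae_iff.mp hin
        simpa [Set.compl_def] using h0
      have hz : ∫ ω, ((M ω) Eᶜ).toReal ∂μ = 0 := by
        have heq0 : (fun ω => ((M ω) Eᶜ).toReal) =ᵐ[μ] fun _ => (0:ℝ) := by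
          filter_upwards [h2] with ω hω
          rw [hω]; simp
        rw [integral_congr_ae heq0, integral_zero]
      rw [hz] at hval
      have hμEc : μ Eᶜ = 0 := by
        have h4 := hval.symm
        rwa [ENNReal.toReal_eq_zero_iff, or_iff_left (measure_ne_top _ _)] at h4
      have h5 : ∀ᵐ ω ∂μ, ω ∈ E := ae_iff.mpr (by simpa [Set.compl_def] using hμEc)
      filter_upwards [h5] with ω hω
      exact (hEmem ω).mp hω
    · intro h
      have hμEc : μ Eᶜ = 0 := by
        have h5 : ∀ᵐ ω ∂μ, ω ∈ E := by
          filter_upwards [h] with ω hω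
          exact (hEmem ω).mpr hω
        have h0 : μ {ω | ¬ ω ∈ E} = 0 := ae_iff.mp h5
        simpa [Set.compl_def] using h0
      have hz : ∫ ω, ((M ω) Eᶜ).toReal ∂μ = 0 := by rw [hval, hμEc]; simp
      have hnn : 0 ≤ᵐ[μ] fun ω => ((M ω) Eᶜ).toReal :=
        Filter.Eventually.of_forall fun ω => ENNReal.toReal_nonneg
      have h3 := (integral_eq_zero_iff_of_nonneg_ae hnn hMEc_int).mp hz
      filter_upwards [h3, hconst] with ω hω hc
      have hM0 : (M ω) Eᶜ = 0 := by
        have h6 : ((M ω) Eᶜ).toReal = 0 := hω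
        rwa [ENNReal.toReal_eq_zero_iff, or_iff_left (measure_ne_top _ _)] at h6
      have hin : ∀ᵐ ω' ∂(M ω), ω' ∈ E :=
        ae_iff.mpr (by simpa [Set.compl_def] using hM0)
      filter_upwards [hin, hc] with ω' h1 h2
      rw [← h2]
      exact (hEmem ω').mp h1
  have hind_int : ∀ (A : Set Ω), MeasurableSet A →
      Integrable (A.indicator fun _ => (1:ℝ)) μ := by
    intro A hA
    refine integrable_of_bounded_measurable μ (measurable_const.indicator hA) (C := 1) ?_
    intro ω
    by_cases hω : ω ∈ A <;> simp [Set.indicator_apply, hω]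
  have hQsSMζ : ∀ s : Set 𝒴, MeasurableSet s →
      StronglyMeasurable[MeasurableSpace.comap ζ inferInstance] fun ω => (Q ω s).toReal :=
    fun s hs => toReal_SM _ (measurable_condDistrib hs)
  have hQs_meas : ∀ s : Set 𝒴, MeasurableSet s → Measurable fun ω => (Q ω s).toReal :=
    fun s hs => ((Measure.measurable_coe hs).comp hQmeas).ennreal_toReal
  have hQs_bd : ∀ (s : Set 𝒴) ω, |(Q ω s).toReal| ≤ 1 := by
    intro s ω
    rw [abs_of_nonneg ENNReal.toReal_nonneg]
    calc (Q ω s).toReal ≤ (Q ω Set.univ).toReal :=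
          ENNReal.toReal_mono (measure_ne_top _ _) (measure_mono (Set.subset_univ _))
      _ = 1 := by rw [(hQprob ω).measure_univ]; simp
  have hQs_int : ∀ s : Set 𝒴, MeasurableSet s → Integrable (fun ω => (Q ω s).toReal) μ :=
    fun s hs => integrable_of_bounded_measurable μ (hQs_meas s hs) (hQs_bd s)
  have hQIt_int : ∀ (s : Set 𝒴) (t : Set 𝒲), MeasurableSet s → MeasurableSet t →
      Integrable ((fun ω => (Q ω s).toReal) * ((η ⁻¹' t).indicator fun _ => (1:ℝ))) μ := by
    intro s t hs ht
    refine integrable_of_bounded_measurable μ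
      ((hQs_meas s hs).mul (measurable_const.indicator (hη ht))) (C := 1) ?_
    intro ω
    rw [Pi.mul_apply, abs_mul]
    by_cases hω : ω ∈ η ⁻¹' t
    · simp only [Set.indicator_apply, hω, if_true, abs_one, mul_one]
      exact hQs_bd s ω
    · simp [Set.indicator_apply, hω]
  have hCIiff : (∀ᵐ ω ∂μ, P ω = Q ω)
      ↔ CondIndepFun (MeasurableSpace.comap ζ inferInstance) hζ.comap_le ξ η μ := by
    constructor
    · intro hPQ
      rw [condIndepFun_iff_condExp_inter_preimage_eq_mul hξ hη]
      intro s t hs ht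
      have hIs_int := hind_int _ (hξ hs)
      have hIt_int := hind_int _ (hη ht)
      have hInter_int := hind_int _ ((hξ hs).inter (hη ht))
      have hηtmp : MeasurableSet[MeasurableSpace.comap (fun ω' => (η ω', ζ ω'))
          inferInstance] (η ⁻¹' t) := by
        refine ⟨t ×ˢ Set.univ, ht.prod MeasurableSet.univ, ?_⟩
        ext ω; simp
      have hItSMp := indicator_one_SM _ hηtmp
      have hsplitfun : ((ξ ⁻¹' s ∩ η ⁻¹' t).indicator fun _ => (1:ℝ))
          = ((η ⁻¹' t).indicator fun _ => (1:ℝ)) * ((ξ ⁻¹' s).indicator fun _ => (1:ℝ)) := by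
        funext ω
        by_cases h1 : ω ∈ ξ ⁻¹' s <;> by_cases h2 : ω ∈ η ⁻¹' t <;>
          simp [Set.indicator_apply, h1, h2]
      have st2 : μ[((η ⁻¹' t).indicator fun _ => (1:ℝ)) *
            ((ξ ⁻¹' s).indicator fun _ => (1:ℝ))|MeasurableSpace.comap (fun ω' => (η ω', ζ ω')) inferInstance]
          =ᵐ[μ] ((η ⁻¹' t).indicator fun _ => (1:ℝ)) *
            μ[(ξ ⁻¹' s).indicator fun _ => (1:ℝ)|MeasurableSpace.comap (fun ω' => (η ω', ζ ω')) inferInstance] :=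
        condExp_mul_of_stronglyMeasurable_left hItSMp (by rw [← hsplitfun]; exact hInter_int) hIs_int
      have st3 : μ[(ξ ⁻¹' s).indicator fun _ => (1:ℝ)|MeasurableSpace.comap (fun ω' => (η ω', ζ ω')) inferInstance]
          =ᵐ[μ] fun ω => (Q ω s).toReal := by
        refine (condDistrib_ae_eq_condExp_toReal (μ := μ) hpair hξ hs).symm.trans ?_
        filter_upwards [hPQ] with ω hω
        rw [show condDistrib ξ (fun ω' => (η ω', ζ ω')) μ (η ω, ζ ω) = P ω from rfl, hω]
      have st4 : μ[(ξ ⁻¹' s ∩ η ⁻¹' t).indicator fun _ =>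
            (1:ℝ)|MeasurableSpace.comap (fun ω' => (η ω', ζ ω')) inferInstance]
          =ᵐ[μ] ((η ⁻¹' t).indicator fun _ => (1:ℝ)) * fun ω => (Q ω s).toReal := by
        rw [hsplitfun]
        exact st2.trans (Filter.EventuallyEq.mul (Filter.EventuallyEq.refl _ _) st3)
      have st5 : μ[(ξ ⁻¹' s ∩ η ⁻¹' t).indicator fun _ => (1:ℝ)|MeasurableSpace.comap ζ inferInstance]
          =ᵐ[μ] μ[((η ⁻¹' t).indicator fun _ => (1:ℝ)) *
            (fun ω => (Q ω s).toReal)|MeasurableSpace.comap ζ inferInstance] :=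
        ((condExp_condExp_of_le (μ := μ) hζp hmp).symm).trans (condExp_congr_ae st4)
      have st6 : μ[(fun ω => (Q ω s).toReal) *
            ((η ⁻¹' t).indicator fun _ => (1:ℝ))|MeasurableSpace.comap ζ inferInstance]
          =ᵐ[μ] (fun ω => (Q ω s).toReal) *
            μ[(η ⁻¹' t).indicator fun _ => (1:ℝ)|MeasurableSpace.comap ζ inferInstance] :=
        condExp_mul_of_stronglyMeasurable_left (hQsSMζ s hs) (hQIt_int s t hs ht) hIt_int
      have st7 : μ[(ξ ⁻¹' s ∩ η ⁻¹' t).indicator fun _ => (1:ℝ)|MeasurableSpace.comap ζ inferInstance]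
          =ᵐ[μ] (fun ω => (Q ω s).toReal) *
            μ[(η ⁻¹' t).indicator fun _ => (1:ℝ)|MeasurableSpace.comap ζ inferInstance] := by
        refine st5.trans ?_
        rw [mul_comm]
        exact st6
      refine st7.trans ?_
      have st8 := condDistrib_ae_eq_condExp_toReal (μ := μ) hζ hξ hs
      filter_upwards [st8, Filter.EventuallyEq.refl (ae μ)
        (μ[(η ⁻¹' t).indicator fun _ => (1:ℝ)|MeasurableSpace.comap ζ inferInstance])] with ω h1 h2
      rw [Pi.mul_apply, h1]
    · intro hCI
      have hCI' := (condIndepFun_iff_condExp_inter_preimage_eq_mul hξ hη).mp hCI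
      have htotal : ∀ s : Set 𝒴, MeasurableSet s → ∫ ω, (Q ω s).toReal ∂μ
          = ∫ ω, ((ξ ⁻¹' s).indicator fun _ => (1:ℝ)) ω ∂μ := by
        intro s hs
        rw [integral_congr_ae (condDistrib_ae_eq_condExp_toReal (μ := μ) hζ hξ hs),
          integral_condExp hmζ]
      have hstep : ∀ s ∈ T, ∀ᵐ ω ∂μ, P ω s = Q ω s := by
        intro s hsT
        have hs := hTmeas s hsT
        have hIs_int := hind_int _ (hξ hs)
        have hrect : ∀ (t : Set 𝒲) (B : Set 𝒵), MeasurableSet t → MeasurableSet B →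
            ∫ ω in (fun ω' => (η ω', ζ ω')) ⁻¹' (t ×ˢ B), (Q ω s).toReal ∂μ
              = ∫ ω in (fun ω' => (η ω', ζ ω')) ⁻¹' (t ×ˢ B),
                  ((ξ ⁻¹' s).indicator fun _ => (1:ℝ)) ω ∂μ := by
          intro t B ht hB
          have hIt_int := hind_int _ (hη ht)
          have hpre : (fun ω' => (η ω', ζ ω')) ⁻¹' (t ×ˢ B) = ζ ⁻¹' B ∩ η ⁻¹' t := by
            rw [Set.mk_preimage_prod]
            exact Set.inter_comm _ _
          rw [hpre]
          have hζB : MeasurableSet[MeasurableSpace.comap ζ inferInstance] (ζ ⁻¹' B) :=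
            ⟨B, hB, rfl⟩
          have hindmul : (η ⁻¹' t).indicator (fun ω => (Q ω s).toReal)
              = (fun ω => (Q ω s).toReal) * ((η ⁻¹' t).indicator fun _ => (1:ℝ)) := by
            funext ω
            by_cases hω : ω ∈ η ⁻¹' t <;> simp [Set.indicator_apply, hω]
          have hii : (η ⁻¹' t).indicator ((ξ ⁻¹' s).indicator fun _ => (1:ℝ))
              = (ξ ⁻¹' s ∩ η ⁻¹' t).indicator fun _ => (1:ℝ) := by
            rw [Set.indicator_indicator, Set.inter_comm]
          have pull : μ[(fun ω => (Q ω s).toReal) *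
                ((η ⁻¹' t).indicator fun _ => (1:ℝ))|MeasurableSpace.comap ζ inferInstance]
              =ᵐ[μ] (fun ω => (Q ω s).toReal) *
                μ[(η ⁻¹' t).indicator fun _ => (1:ℝ)|MeasurableSpace.comap ζ inferInstance] :=
            condExp_mul_of_stronglyMeasurable_left (hQsSMζ s hs) (hQIt_int s t hs ht) hIt_int
          have hmulQ : μ[(ξ ⁻¹' s ∩ η ⁻¹' t).indicator
                (fun _ => (1:ℝ))|MeasurableSpace.comap ζ inferInstance]
              =ᵐ[μ] (fun ω => (Q ω s).toReal) *
                μ[(η ⁻¹' t).indicator fun _ => (1:ℝ)|MeasurableSpace.comap ζ inferInstance] := by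
            refine (hCI' s t hs ht).trans ?_
            have st8 := (condDistrib_ae_eq_condExp_toReal (μ := μ) hζ hξ hs).symm
            filter_upwards [st8] with ω h1
            rw [Pi.mul_apply, ← h1]
          calc ∫ ω in ζ ⁻¹' B ∩ η ⁻¹' t, (Q ω s).toReal ∂μ
              = ∫ ω in ζ ⁻¹' B, (η ⁻¹' t).indicator (fun ω => (Q ω s).toReal) ω ∂μ :=
                (setIntegral_indicator (hη ht)).symm
            _ = ∫ ω in ζ ⁻¹' B, ((fun ω => (Q ω s).toReal) *
                  ((η ⁻¹' t).indicator fun _ => (1:ℝ))) ω ∂μ := by rw [hindmul]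
            _ = ∫ ω in ζ ⁻¹' B, (μ[(fun ω => (Q ω s).toReal) *
                  ((η ⁻¹' t).indicator fun _ => (1:ℝ))|MeasurableSpace.comap ζ inferInstance]) ω ∂μ :=
                (setIntegral_condExp hmζ (hQIt_int s t hs ht) hζB).symm
            _ = ∫ ω in ζ ⁻¹' B, (μ[(ξ ⁻¹' s ∩ η ⁻¹' t).indicator
                  (fun _ => (1:ℝ))|MeasurableSpace.comap ζ inferInstance]) ω ∂μ := by
                refine integral_congr_ae (ae_restrict_of_ae ?_)
                exact pull.trans hmulQ.symm
            _ = ∫ ω in ζ ⁻¹' B, (ξ ⁻¹' s ∩ η ⁻¹' t).indicator (fun _ => (1:ℝ)) ω ∂μ :=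
                setIntegral_condExp hmζ (hind_int _ ((hξ hs).inter (hη ht))) hζB
            _ = ∫ ω in ζ ⁻¹' B, (η ⁻¹' t).indicator ((ξ ⁻¹' s).indicator fun _ => (1:ℝ)) ω ∂μ := by
                rw [hii]
            _ = ∫ ω in ζ ⁻¹' B ∩ η ⁻¹' t, ((ξ ⁻¹' s).indicator fun _ => (1:ℝ)) ω ∂μ :=
                setIntegral_indicator (hη ht)
        have main : ∀ E' : Set (𝒲 × 𝒵), MeasurableSet E' →
            ∫ ω in (fun ω' => (η ω', ζ ω')) ⁻¹' E', (Q ω s).toReal ∂μ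
              = ∫ ω in (fun ω' => (η ω', ζ ω')) ⁻¹' E',
                  ((ξ ⁻¹' s).indicator fun _ => (1:ℝ)) ω ∂μ := by
          intro E' hE'
          refine MeasurableSpace.induction_on_inter
            (C := fun E' _ => ∫ ω in (fun ω' => (η ω', ζ ω')) ⁻¹' E', (Q ω s).toReal ∂μ
              = ∫ ω in (fun ω' => (η ω', ζ ω')) ⁻¹' E',
                  ((ξ ⁻¹' s).indicator fun _ => (1:ℝ)) ω ∂μ)
            generateFrom_prod.symm isPiSystem_prod ?_ ?_ ?_ ?_ E' hE'
          · simp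
          · rintro _ ⟨t, ht, B, hB, rfl⟩
            exact hrect t B ht hB
          · intro E'' hE'' ih
            have h1 := integral_add_compl (hpair hE'') (hQs_int s hs)
            have h2 := integral_add_compl (hpair hE'') hIs_int
            have h3 := htotal s hs
            rw [Set.preimage_compl]
            rw [← Set.preimage_compl] at h1 h2 ⊢
            have e1 : ∫ ω in ((fun ω' => (η ω', ζ ω')) ⁻¹' E''), (Q ω s).toReal ∂μ
                = ∫ ω in ((fun ω' => (η ω', ζ ω')) ⁻¹' E''),
                    ((ξ ⁻¹' s).indicator fun _ => (1:ℝ)) ω ∂μ := ih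
            rw [Set.preimage_compl] at h1 h2 ⊢
            linarith
          · intro f hdisj hfm ih
            rw [Set.preimage_iUnion,
              integral_iUnion (fun i => hpair (hfm i))
                (fun i j hij => (hdisj hij).preimage _) ((hQs_int s hs)).integrableOn,
              integral_iUnion (fun i => hpair (hfm i))
                (fun i j hij => (hdisj hij).preimage _) hIs_int.integrableOn]
            exact tsum_congr ih
        have hF_eq : (fun ω => (Q ω s).toReal) =ᵐ[μ]
            μ[(ξ ⁻¹' s).indicator (fun _ => (1:ℝ))|MeasurableSpace.comap
              (fun ω' => (η ω', ζ ω')) inferInstance] := by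
          refine ae_eq_condExp_of_forall_setIntegral_eq hmp hIs_int
            (fun A hA hμA => (hQs_int s hs).integrableOn) ?_ ?_
          · rintro A ⟨E', hE', rfl⟩ -
            exact main E' hE'
          · refine StronglyMeasurable.aestronglyMeasurable ?_
            refine Measurable.stronglyMeasurable ?_
            exact (@Measurable.ennreal_toReal Ω (MeasurableSpace.comap ζ inferInstance) _
              (measurable_condDistrib hs)).mono hζp le_rfl
        have hP_eq := condDistrib_ae_eq_condExp_toReal (μ := μ) hpair hξ hs
        filter_upwards [hP_eq.trans hF_eq.symm] with ω hω
        rwa [ENNReal.toReal_eq_toReal_iff' (measure_ne_top _ _) (measure_ne_top _ _)] at hω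
      have hall := (ae_ball_iff hTc).mpr hstep
      filter_upwards [hall] with ω hω
      exact hText _ _ (hPprob ω) (hQprob ω) hω
  exact ⟨hnonneg, hiff0.trans (hmid.trans (hbridge.trans hCIiff))⟩
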